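/- There exist absolute constants C, c > 0 such that for all positive integers n and f, every n-vertex graph G admits a subgraph H with at most C·f·n·(log n)^c edges that is an f-faulty-degree connectivity certificate of G. -/

import Mathlib

open SimpleGraph

/-- `F` has faulty-degree at most `f`: every vertex is incident to at most `f` edges of `F`. -/
def DegLE {V : Type} (F : Set (Sym2 V)) (f : ℕ) : Prop :=
  ∀ v : V, {e ∈ F | v ∈ e}.ncard ≤ f

/-- `H` is an `f`-faulty-degree connectivity certificate of `G`. -/
def IsFDCertificate {V : Type} (G H : SimpleGraph V) (f : ℕ) : Prop :=
  H ≤ G ∧ ∀ F : Set (Sym2 V), F ⊆ G.edgeSet → DegLE F f →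
    ∀ u v : V, ((H.deleteEdges F).Reachable u v ↔ (G.deleteEdges F).Reachable u v)

namespace FDCert

open Finset
open scoped Classical

noncomputable section

variable {V : Type} [Fintype V]

/-- The edge finset of a graph. -/
def EF (G : SimpleGraph V) : Finset (Sym2 V) := (Set.toFinite G.edgeSet).toFinset

lemma mem_EF {G : SimpleGraph V} {e : Sym2 V} : e ∈ EF G ↔ e ∈ G.edgeSet :=
  Set.Finite.mem_toFinset _

/-- An edge crosses `S` if it has an endpoint inside and an endpoint outside. -/
def cross (S : Finset V) (e : Sym2 V) : Prop := (∃ v ∈ e, v ∈ S) ∧ (∃ v ∈ e, v ∉ S)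

/-- Cut edges of `G` across `S`. -/
def cutF (G : SimpleGraph V) (S : Finset V) : Finset (Sym2 V) :=
  (EF G).filter (cross S)

/-- Support (non-isolated vertices) of `G`, as a finset. -/
def suppF (G : SimpleGraph V) : Finset V := univ.filter (fun v => ∃ u, G.Adj v u)

lemma mem_suppF {G : SimpleGraph V} {v : V} : v ∈ suppF G ↔ ∃ u, G.Adj v u := by
  simp [suppF]

/-- The canonical small-side index family for cuts. -/
def II (G : SimpleGraph V) : Finset (Finset V) :=
  (suppF G).powerset.filter (fun S => S.Nonempty ∧ 2 * S.card ≤ (suppF G).card)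

lemma degLE_mono {F F' : Set (Sym2 V)} (h : F' ⊆ F) {f : ℕ} (hF : DegLE F f) : DegLE F' f := by
  intro v
  refine le_trans (Set.ncard_le_ncard ?_ (Set.toFinite _)) (hF v)
  intro e he
  exact ⟨h he.1, he.2⟩

lemma cert_refl (G : SimpleGraph V) (f : ℕ) : IsFDCertificate G G f :=
  ⟨le_rfl, fun _ _ _ _ _ => Iff.rfl⟩

lemma deleteEdges_mono_left {H G : SimpleGraph V} (h : H ≤ G) (F : Set (Sym2 V)) :
    H.deleteEdges F ≤ G.deleteEdges F := by
  intro x y hxy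
  rw [SimpleGraph.deleteEdges_adj] at hxy ⊢
  exact ⟨h hxy.1, hxy.2⟩

lemma deleteEdges_inter_eq {H M : SimpleGraph V} (hHM : H ≤ M) (F : Set (Sym2 V)) :
    H.deleteEdges (F ∩ M.edgeSet) = H.deleteEdges F := by
  ext x y
  rw [SimpleGraph.deleteEdges_adj, SimpleGraph.deleteEdges_adj]
  constructor
  · rintro ⟨hadj, hmem⟩
    refine ⟨hadj, fun hF => hmem ⟨hF, SimpleGraph.edgeSet_mono hHM ((SimpleGraph.mem_edgeSet _).mpr hadj)⟩⟩
  · rintro ⟨hadj, hmem⟩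
    exact ⟨hadj, fun hF => hmem hF.1⟩

lemma cert_trans {G M H : SimpleGraph V} {f : ℕ}
    (h1 : IsFDCertificate G M f) (h2 : IsFDCertificate M H f) : IsFDCertificate G H f := by
  refine ⟨h2.1.trans h1.1, ?_⟩
  intro F hFsub hdeg u v
  have hF' : F ∩ M.edgeSet ⊆ M.edgeSet := Set.inter_subset_right
  have hdeg' : DegLE (F ∩ M.edgeSet) f := degLE_mono Set.inter_subset_left hdeg
  have e1 : H.deleteEdges F = H.deleteEdges (F ∩ M.edgeSet) := (deleteEdges_inter_eq h2.1 F).symm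
  have e2 : M.deleteEdges F = M.deleteEdges (F ∩ M.edgeSet) := (deleteEdges_inter_eq le_rfl F).symm
  rw [e1]
  calc (H.deleteEdges (F ∩ M.edgeSet)).Reachable u v
      ↔ (M.deleteEdges (F ∩ M.edgeSet)).Reachable u v := h2.2 _ hF' hdeg' u v
    _ ↔ (M.deleteEdges F).Reachable u v := by rw [e2]
    _ ↔ (G.deleteEdges F).Reachable u v := h1.2 F hFsub hdeg u v

lemma step_reach {G' H' K : SimpleGraph V} {f : ℕ} (hc : IsFDCertificate G' H' f)
    (hK : H' ≤ K) (F : Set (Sym2 V)) (hdeg : DegLE F f) {a b : V}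
    (hab : G'.Adj a b) (hnF : s(a, b) ∉ F) : (K.deleteEdges F).Reachable a b := by
  have hF' : F ∩ G'.edgeSet ⊆ G'.edgeSet := Set.inter_subset_right
  have hr : ((H'.deleteEdges (F ∩ G'.edgeSet)).Reachable a b) := by
    apply (hc.2 _ hF' (degLE_mono Set.inter_subset_left hdeg) a b).mpr
    apply SimpleGraph.Adj.reachable
    rw [SimpleGraph.deleteEdges_adj]
    exact ⟨hab, fun hmem => hnF hmem.1⟩
  refine hr.mono ?_
  intro x y hxy
  rw [SimpleGraph.deleteEdges_adj] at hxy ⊢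
  refine ⟨hK hxy.1, fun hxyF => hxy.2 ⟨hxyF, SimpleGraph.edgeSet_mono hc.1 ((SimpleGraph.mem_edgeSet _).mpr hxy.1)⟩⟩

lemma cert_sup {G₁ G₂ H₁ H₂ : SimpleGraph V} {f : ℕ}
    (h1 : IsFDCertificate G₁ H₁ f) (h2 : IsFDCertificate G₂ H₂ f) :
    IsFDCertificate (G₁ ⊔ G₂) (H₁ ⊔ H₂) f := by
  refine ⟨sup_le_sup h1.1 h2.1, ?_⟩
  intro F hFsub hdeg u v
  constructor
  · intro h
    exact h.mono (deleteEdges_mono_left (sup_le_sup h1.1 h2.1) F)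
  · intro h
    obtain ⟨p⟩ := h
    induction p with
    | nil => exact SimpleGraph.Reachable.refl _
    | @cons a c v hadj p ih =>
      refine SimpleGraph.Reachable.trans ?_ ih
      rw [SimpleGraph.deleteEdges_adj, SimpleGraph.sup_adj] at hadj
      rcases hadj.1 with hG | hG
      · exact step_reach h1 le_sup_left F hdeg hG hadj.2
      · exact step_reach h2 le_sup_right F hdeg hG hadj.2

/-- counting: edges of `F'` all touching `T`, with degree bound `f`, number at most `f·|T|`. -/
lemma card_incident_le {F : Set (Sym2 V)} {f : ℕ} (hdeg : DegLE F f) (F' : Finset (Sym2 V))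
    (hF' : ↑F' ⊆ F) (T : Finset V) (hT : ∀ e ∈ F', ∃ v ∈ T, v ∈ e) :
    F'.card ≤ f * T.card := by
  calc F'.card ≤ (T.biUnion (fun v => F'.filter (fun e => v ∈ e))).card := by
        apply card_le_card
        intro e he
        obtain ⟨v, hvT, hve⟩ := hT e he
        exact mem_biUnion.mpr ⟨v, hvT, mem_filter.mpr ⟨he, hve⟩⟩
    _ ≤ ∑ v ∈ T, (F'.filter (fun e => v ∈ e)).card := card_biUnion_le
    _ ≤ ∑ _v ∈ T, f := by
        apply sum_le_sum
        intro v _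
        have hsub : (↑(F'.filter (fun e => v ∈ e)) : Set (Sym2 V)) ⊆ {e ∈ F | v ∈ e} := by
          intro e he
          rw [Finset.coe_filter] at he
          exact ⟨hF' he.1, he.2⟩
        calc (F'.filter (fun e => v ∈ e)).card
            = (↑(F'.filter (fun e => v ∈ e)) : Set (Sym2 V)).ncard := (Set.ncard_coe_finset _).symm
          _ ≤ ({e ∈ F | v ∈ e} : Set (Sym2 V)).ncard := Set.ncard_le_ncard hsub (Set.toFinite _)
          _ ≤ f := hdeg v
    _ = f * T.card := by rw [sum_const, smul_eq_mul, mul_comm]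

lemma reach_of_cuts (K : SimpleGraph V) (W : Finset V)
    (hcut : ∀ T : Finset V, T ⊆ W → T.Nonempty → T ≠ W →
      ∃ x y, K.Adj x y ∧ x ∈ T ∧ y ∈ W ∧ y ∉ T)
    {u v : V} (hu : u ∈ W) (hv : v ∈ W) : K.Reachable u v := by
  set T := W.filter (fun x => K.Reachable u x) with hT
  by_cases hvT : v ∈ T
  · exact (mem_filter.mp hvT).2
  · exfalso
    have hTW : T ⊆ W := filter_subset _ _
    have hTne : T.Nonempty := ⟨u, mem_filter.mpr ⟨hu, SimpleGraph.Reachable.refl u⟩⟩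
    have hTneW : T ≠ W := fun h => hvT (h ▸ hv)
    obtain ⟨x, y, hadj, hxT, hyW, hyT⟩ := hcut T hTW hTne hTneW
    exact hyT (mem_filter.mpr ⟨hyW, ((mem_filter.mp hxT).2).trans hadj.reachable⟩)

lemma reach_adj_exists {K : SimpleGraph V} {u v : V} (h : K.Reachable u v) (hne : u ≠ v) :
    ∃ x, K.Adj u x := by
  obtain ⟨p⟩ := h
  cases p with
  | nil => exact absurd rfl hne
  | cons h _ => exact ⟨_, h⟩

lemma cross_elim {G : SimpleGraph V} {S : Finset V} {e : Sym2 V}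
    (he : e ∈ EF G) (hc : cross S e) :
    ∃ a b, e = s(a, b) ∧ G.Adj a b ∧ a ∈ S ∧ b ∉ S := by
  induction e using Sym2.inductionOn with
  | _ x y =>
    rw [mem_EF, SimpleGraph.mem_edgeSet] at he
    obtain ⟨⟨v1, hv1, hv1S⟩, ⟨v2, hv2, hv2S⟩⟩ := hc
    rw [Sym2.mem_iff] at hv1 hv2
    rcases hv1 with h1 | h1 <;> rcases hv2 with h2 | h2 <;> rw [h1] at hv1S <;> rw [h2] at hv2S
    · exact absurd hv1S hv2S
    · exact ⟨x, y, rfl, he, hv1S, hv2S⟩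
    · exact ⟨y, x, Sym2.eq_swap, he.symm, hv1S, hv2S⟩
    · exact absurd hv1S hv2S

lemma cross_compl {S W : Finset V} {e : Sym2 V} (he : ∀ v ∈ e, v ∈ W) :
    cross S e ↔ cross (W \ S) e := by
  induction e using Sym2.inductionOn with
  | _ x y =>
    have hx := he x (Sym2.mem_mk_left x y)
    have hy := he y (Sym2.mem_mk_right x y)
    unfold cross
    simp only [Sym2.mem_iff, mem_sdiff]
    constructor
    · rintro ⟨⟨v1, hv1, hv1S⟩, ⟨v2, hv2, hv2S⟩⟩
      refine ⟨⟨v2, hv2, ?_, hv2S⟩, ⟨v1, hv1, fun hc => hc.2 hv1S⟩⟩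
      rcases hv2 with rfl | rfl <;> assumption
    · rintro ⟨⟨v1, hv1, _, hv1S⟩, ⟨v2, hv2, hv2S⟩⟩
      refine ⟨⟨v2, hv2, ?_⟩, ⟨v1, hv1, hv1S⟩⟩
      by_contra hc
      rcases hv2 with rfl | rfl <;> exact hv2S ⟨(by assumption), hc⟩

lemma edge_vert_supp {G : SimpleGraph V} {e : Sym2 V} (he : e ∈ G.edgeSet) {v : V}
    (hv : v ∈ e) : v ∈ suppF G := by
  induction e using Sym2.inductionOn with
  | _ x y =>
    rw [SimpleGraph.mem_edgeSet] at he
    rw [mem_suppF]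
    rw [Sym2.mem_iff] at hv
    rcases hv with rfl | rfl
    · exact ⟨y, he⟩
    · exact ⟨x, he.symm⟩

/-! ### the three split graphs -/

def inS (G : SimpleGraph V) (S : Finset V) : SimpleGraph V where
  Adj x y := G.Adj x y ∧ x ∈ S ∧ y ∈ S
  symm := ⟨fun x y ⟨h, hx, hy⟩ => ⟨h.symm, hy, hx⟩⟩
  loopless := ⟨fun x h => G.loopless.irrefl x h.1⟩

def outS (G : SimpleGraph V) (S : Finset V) : SimpleGraph V where
  Adj x y := G.Adj x y ∧ x ∉ S ∧ y ∉ S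
  symm := ⟨fun x y ⟨h, hx, hy⟩ => ⟨h.symm, hy, hx⟩⟩
  loopless := ⟨fun x h => G.loopless.irrefl x h.1⟩

def crossS (G : SimpleGraph V) (S : Finset V) : SimpleGraph V where
  Adj x y := G.Adj x y ∧ ((x ∈ S ∧ y ∉ S) ∨ (y ∈ S ∧ x ∉ S))
  symm := ⟨fun x y ⟨h, hxy⟩ => ⟨h.symm, hxy.elim Or.inr Or.inl⟩⟩
  loopless := ⟨fun x h => G.loopless.irrefl x h.1⟩

lemma split_eq (G : SimpleGraph V) (S : Finset V) :
    crossS G S ⊔ (inS G S ⊔ outS G S) = G := by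
  ext x y
  simp only [SimpleGraph.sup_adj]
  show (G.Adj x y ∧ _) ∨ ((G.Adj x y ∧ _) ∨ (G.Adj x y ∧ _)) ↔ G.Adj x y
  constructor
  · rintro (h | h | h) <;> exact h.1
  · intro h
    by_cases hx : x ∈ S <;> by_cases hy : y ∈ S
    · exact Or.inr (Or.inl ⟨h, hx, hy⟩)
    · exact Or.inl ⟨h, Or.inl ⟨hx, hy⟩⟩
    · exact Or.inl ⟨h, Or.inr ⟨hy, hx⟩⟩
    · exact Or.inr (Or.inr ⟨h, hx, hy⟩)

lemma EF_crossS (G : SimpleGraph V) (S : Finset V) : EF (crossS G S) = cutF G S := by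
  ext e
  induction e using Sym2.inductionOn with
  | _ x y =>
    rw [mem_EF, SimpleGraph.mem_edgeSet]
    rw [cutF, mem_filter, mem_EF, SimpleGraph.mem_edgeSet]
    show (G.Adj x y ∧ _) ↔ _
    unfold cross
    simp only [Sym2.mem_iff]
    constructor
    · rintro ⟨h, (⟨hx, hy⟩ | ⟨hy, hx⟩)⟩
      · exact ⟨h, ⟨x, Or.inl rfl, hx⟩, ⟨y, Or.inr rfl, hy⟩⟩
      · exact ⟨h, ⟨y, Or.inr rfl, hy⟩, ⟨x, Or.inl rfl, hx⟩⟩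
    · rintro ⟨h, ⟨v1, hv1, hv1S⟩, ⟨v2, hv2, hv2S⟩⟩
      refine ⟨h, ?_⟩
      rcases hv1 with h1 | h1 <;> rcases hv2 with h2 | h2 <;> rw [h1] at hv1S <;> rw [h2] at hv2S
      · exact absurd hv1S hv2S
      · exact Or.inl ⟨hv1S, hv2S⟩
      · exact Or.inr ⟨hv1S, hv2S⟩
      · exact absurd hv1S hv2S

lemma suppF_inS (G : SimpleGraph V) (S : Finset V) : suppF (inS G S) ⊆ S := by
  intro v hv
  obtain ⟨u, hu⟩ := mem_suppF.mp hv
  exact hu.2.1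

lemma suppF_outS (G : SimpleGraph V) (S : Finset V) :
    suppF (outS G S) ⊆ suppF G \ S := by
  intro v hv
  obtain ⟨u, hu⟩ := mem_suppF.mp hv
  exact mem_sdiff.mpr ⟨mem_suppF.mpr ⟨u, hu.1⟩, hu.2.1⟩

lemma suppF_mono {G' G : SimpleGraph V} (h : G' ≤ G) : suppF G' ⊆ suppF G := by
  intro v hv
  obtain ⟨u, hu⟩ := mem_suppF.mp hv
  exact mem_suppF.mpr ⟨u, h hu⟩

lemma EF_mono {G' G : SimpleGraph V} (h : G' ≤ G) : EF G' ⊆ EF G := by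
  intro e he
  exact mem_EF.mpr (SimpleGraph.edgeSet_mono h (mem_EF.mp he))

lemma EF_sup_card (H₁ H₂ : SimpleGraph V) :
    (EF (H₁ ⊔ H₂)).card ≤ (EF H₁).card + (EF H₂).card := by
  refine le_trans (card_le_card ?_) (card_union_le _ _)
  intro e he
  rw [mem_EF, SimpleGraph.edgeSet_sup] at he
  rcases he with h | h
  · exact mem_union_left _ (mem_EF.mpr h)
  · exact mem_union_right _ (mem_EF.mpr h)

/-! ### counting lemmas for the sampling step -/

lemma card_powerset_filter_le {α : Type*} [DecidableEq α] (C : Finset α) (t : ℕ) :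
    ((C.powerset.filter (fun D => D.card ≤ t)).card : ℕ)
      = ∑ i ∈ range (t + 1), C.card.choose i := by
  have heq : C.powerset.filter (fun D => D.card ≤ t)
      = (range (t + 1)).biUnion (fun i => C.powersetCard i) := by
    ext D
    simp only [mem_filter, mem_powerset, mem_biUnion, mem_range, mem_powersetCard,
      Nat.lt_succ_iff]
    constructor
    · rintro ⟨h1, h2⟩; exact ⟨D.card, h2, h1, rfl⟩
    · rintro ⟨i, hi, h1, rfl⟩; exact ⟨h1, hi⟩
  rw [heq, card_biUnion]
  · exact sum_congr rfl (fun i _ => card_powersetCard i C)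
  · intro i _ j _ hij
    rw [Function.onFun, Finset.disjoint_left]
    intro D hDi hDj
    rw [mem_powersetCard] at hDi hDj
    exact hij (hDi.2 ▸ hDj.2)

lemma card_bad_le {α : Type*} [DecidableEq α] (E C : Finset α) (hCE : C ⊆ E) (t : ℕ) :
    ((E.powerset.filter (fun E' => (E' ∩ C).card ≤ t)).card : ℕ)
      ≤ (∑ i ∈ range (t + 1), C.card.choose i) * 2 ^ (E.card - C.card) := by
  have hle : (E.powerset.filter fun E' => (E' ∩ C).card ≤ t).card
      ≤ ((C.powerset.filter (fun D => D.card ≤ t)) ×ˢ (E \ C).powerset).card := by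
    apply card_le_card_of_injOn (fun E' => (E' ∩ C, E' \ C))
    · intro E' hE'
      rw [mem_coe, mem_filter, mem_powerset] at hE'
      rw [mem_coe, mem_product]
      refine ⟨?_, ?_⟩
      · rw [mem_filter, mem_powerset]; exact ⟨inter_subset_right, hE'.2⟩
      · rw [mem_powerset]; exact sdiff_subset_sdiff hE'.1 (le_refl C)
    · intro p hp r hr hpr
      simp only [Prod.mk.injEq] at hpr
      have : p \ C ∪ p ∩ C = r \ C ∪ r ∩ C := by rw [hpr.1, hpr.2]
      rwa [sdiff_union_inter, sdiff_union_inter] at this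
  refine hle.trans ?_
  rw [card_product, card_powerset, card_sdiff_of_subset hCE, card_powerset_filter_le]

lemma tail_le (N t : ℕ) (ht : t ≤ N) :
    (∑ i ∈ range (t + 1), (N.choose i : ℝ)) ≤ 3 ^ t * (4 / 3) ^ N := by
  have h1 : ∀ i ∈ range (t + 1), (N.choose i : ℝ) ≤ 3 ^ t * ((1 / 3) ^ i * N.choose i) := by
    intro i hi
    rw [mem_range, Nat.lt_succ_iff] at hi
    have hone : (1 : ℝ) ≤ 3 ^ t * (1 / 3) ^ i := by
      rw [one_div, inv_pow, ← div_eq_mul_inv, le_div_iff₀ (by positivity)]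
      calc (1 : ℝ) * 3 ^ i = 3 ^ i := one_mul _
        _ ≤ 3 ^ t := by
            apply pow_le_pow_right₀ (by norm_num) hi
    calc (N.choose i : ℝ) = 1 * (N.choose i : ℝ) := (one_mul _).symm
      _ ≤ (3 ^ t * (1 / 3) ^ i) * (N.choose i : ℝ) := by
          apply mul_le_mul_of_nonneg_right hone (Nat.cast_nonneg _)
      _ = 3 ^ t * ((1 / 3) ^ i * N.choose i) := by ring
  calc (∑ i ∈ range (t + 1), (N.choose i : ℝ))
      ≤ ∑ i ∈ range (t + 1), (3:ℝ) ^ t * ((1 / 3) ^ i * (N.choose i : ℝ)) := sum_le_sum h1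
    _ = 3 ^ t * ∑ i ∈ range (t + 1), (1 / 3 : ℝ) ^ i * (N.choose i : ℝ) := by rw [mul_sum]
    _ ≤ 3 ^ t * ∑ i ∈ range (N + 1), (1 / 3 : ℝ) ^ i * N.choose i := by
        apply mul_le_mul_of_nonneg_left _ (by positivity)
        apply sum_le_sum_of_subset_of_nonneg (by
          apply range_subset_range.mpr; omega)
        intro i _ _
        positivity
    _ = 3 ^ t * (1 / 3 + 1) ^ N := by
        rw [add_pow]
        congr 1
        apply sum_congr rfl
        intro i _
        rw [one_pow]
        ring
    _ = 3 ^ t * (4 / 3) ^ N := by norm_num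

lemma rho_bound (f n : ℕ) (hn : 1 ≤ n) :
    (3 : ℝ) ^ f * (2 / 3) ^ (10 * (f + Nat.log 2 n + 1)) ≤ 1 / (8 * n) := by
  set L := Nat.log 2 n with hL
  set q := 10 * (f + L + 1) with hq
  have hkey : (8 * n : ℝ) * 3 ^ f ≤ (3 / 2) ^ q := by
    have hn2 : (n : ℝ) ≤ 2 * 2 ^ L := by
      have h2 : n ≤ 2 * 2 ^ L := by
        have hlt := Nat.lt_pow_succ_log_self (b := 2) one_lt_two n
        rw [← hL, pow_succ] at hlt
        omega
      calc (n : ℝ) ≤ ((2 * 2 ^ L : ℕ) : ℝ) := Nat.cast_le.mpr h2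
        _ = 2 * 2 ^ L := by push_cast; ring
    have p1 : (2 : ℝ) ^ L ≤ 57 ^ L := pow_le_pow_left₀ (by norm_num) (by norm_num) L
    have p2 : (3 : ℝ) ^ f ≤ 57 ^ f := pow_le_pow_left₀ (by norm_num) (by norm_num) f
    calc (8 * n : ℝ) * 3 ^ f ≤ (16 * 2 ^ L) * 3 ^ f := by
          apply mul_le_mul_of_nonneg_right _ (by positivity)
          nlinarith [pow_pos (by norm_num : (0:ℝ) < 2) L]
      _ ≤ (57 * 57 ^ L) * 57 ^ f := by
          apply mul_le_mul _ p2 (by positivity) (by positivity)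
          apply mul_le_mul (by norm_num) p1 (by positivity) (by norm_num)
      _ = 57 ^ (f + L + 1) := by rw [pow_add, pow_add, pow_one]; ring
      _ ≤ ((3 / 2 : ℝ) ^ 10) ^ (f + L + 1) := by
          apply pow_le_pow_left₀ (by norm_num)
          norm_num
      _ = (3 / 2) ^ q := by rw [← pow_mul]
  have h23 : ((2 : ℝ) / 3) ^ q = (((3 : ℝ) / 2) ^ q)⁻¹ := by
    rw [← inv_pow]
    norm_num
  have hnpos : (0 : ℝ) < n := by exact_mod_cast hn
  rw [h23, ← div_eq_mul_inv, div_le_div_iff₀ (by positivity) (by positivity)]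
  calc (3 : ℝ) ^ f * (8 * n) = (8 * n : ℝ) * 3 ^ f := by ring
    _ ≤ (3 / 2) ^ q := hkey
    _ = 1 * (3 / 2) ^ q := (one_mul _).symm

lemma mem_II {G : SimpleGraph V} {S : Finset V} :
    S ∈ II G ↔ S ⊆ suppF G ∧ S.Nonempty ∧ 2 * S.card ≤ (suppF G).card := by
  simp [II]

lemma sum_powerset_nonempty_le {α : Type*} [DecidableEq α] (W : Finset α) (n : ℕ)
    (hn : 1 ≤ n) (hwn : W.card ≤ n) :
    ∑ S ∈ W.powerset.filter (fun S => S.Nonempty), ((1 : ℝ) / (8 * n)) ^ S.card ≤ 1 / 2 := by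
  have hnR : (0 : ℝ) < n := by exact_mod_cast hn
  have heq : W.powerset.filter (fun S => S.Nonempty)
      = (Icc 1 W.card).biUnion (fun k => W.powersetCard k) := by
    ext S
    simp only [mem_filter, mem_powerset, mem_biUnion, mem_Icc, mem_powersetCard]
    constructor
    · rintro ⟨h1, h2⟩
      exact ⟨S.card, ⟨card_pos.mpr h2, card_le_card h1⟩, h1, rfl⟩
    · rintro ⟨k, ⟨hk1, _⟩, h1, rfl⟩
      exact ⟨h1, card_pos.mp hk1⟩
  rw [heq, sum_biUnion]
  swap
  · intro i _ j _ hij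
    rw [Function.onFun, Finset.disjoint_left]
    intro D hDi hDj
    rw [mem_powersetCard] at hDi hDj
    exact hij (hDi.2 ▸ hDj.2)
  have hterm : ∀ k ∈ Icc 1 W.card,
      (∑ S ∈ W.powersetCard k, ((1 : ℝ) / (8 * n)) ^ S.card) ≤ (1 / 4) * (1 / 2) ^ k := by
    intro k hk
    rw [mem_Icc] at hk
    have hsum : (∑ S ∈ W.powersetCard k, ((1 : ℝ) / (8 * n)) ^ S.card)
        = (W.card.choose k : ℝ) * ((1 : ℝ) / (8 * n)) ^ k := by
      rw [← card_powersetCard]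
      rw [sum_congr rfl (fun S hS => by rw [(mem_powersetCard.mp hS).2])]
      rw [sum_const, nsmul_eq_mul]
    rw [hsum]
    have h1 : (W.card.choose k : ℝ) ≤ (n : ℝ) ^ k := by
      calc (W.card.choose k : ℝ) ≤ ((W.card ^ k : ℕ) : ℝ) := Nat.cast_le.mpr (Nat.choose_le_pow _ _)
        _ ≤ (n : ℝ) ^ k := by
            push_cast
            exact pow_le_pow_left₀ (by positivity) (Nat.cast_le.mpr hwn) k
    calc (W.card.choose k : ℝ) * ((1 : ℝ) / (8 * n)) ^ k
        ≤ (n : ℝ) ^ k * ((1 : ℝ) / (8 * n)) ^ k := by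
          apply mul_le_mul_of_nonneg_right h1 (by positivity)
      _ = ((1 : ℝ) / 8) ^ k := by
          rw [← mul_pow]
          congr 1
          field_simp
      _ = (1 / 4 : ℝ) ^ k * (1 / 2) ^ k := by rw [← mul_pow]; norm_num
      _ ≤ (1 / 4) * (1 / 2) ^ k := by
          apply mul_le_mul_of_nonneg_right _ (by positivity)
          calc ((1 / 4 : ℝ)) ^ k ≤ (1 / 4 : ℝ) ^ 1 := by
                apply pow_le_pow_of_le_one (by norm_num) (by norm_num) hk.1
            _ = 1 / 4 := pow_one _
  calc (∑ k ∈ Icc 1 W.card, ∑ S ∈ W.powersetCard k, ((1 : ℝ) / (8 * n)) ^ S.card)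
      ≤ ∑ k ∈ Icc 1 W.card, (1 / 4 : ℝ) * (1 / 2) ^ k := sum_le_sum hterm
    _ ≤ ∑ k ∈ range (W.card + 1), (1 / 4 : ℝ) * (1 / 2) ^ k := by
        apply sum_le_sum_of_subset_of_nonneg
        · intro k hk
          rw [mem_Icc] at hk
          rw [mem_range]
          omega
        · intro k _ _
          positivity
    _ = (1 / 4 : ℝ) * ∑ k ∈ range (W.card + 1), (1 / 2 : ℝ) ^ k := by rw [mul_sum]
    _ ≤ (1 / 4 : ℝ) * 2 := by
        apply mul_le_mul_of_nonneg_left _ (by norm_num)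
        have := sum_geometric_two_le (W.card + 1)
        simpa using this
    _ = 1 / 2 := by norm_num

/-- The sampling lemma: an "expander" piece contains a proper sub-edge-set that still has
all (small-side) cuts of size `> f·|S|`. -/
lemma sample_exists (G : SimpleGraph V) (f q : ℕ) (hfq : f ≤ q)
    (hbig : 2 ≤ (EF G).card)
    (hρ : (3 : ℝ) ^ f * (2 / 3) ^ q ≤ 1 / (8 * Fintype.card V))
    (hexp : ∀ S ∈ II G, q * S.card < (cutF G S).card) :
    ∃ E' : Finset (Sym2 V), E' ⊆ EF G ∧ E' ≠ EF G ∧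
      ∀ S ∈ II G, f * S.card < (E' ∩ cutF G S).card := by
  classical
  set E := EF G with hE
  set m := E.card with hm
  set n := Fintype.card V with hn
  have hn1 : 1 ≤ n := by
    obtain ⟨e, he⟩ := card_pos.mp (by omega : 0 < E.card)
    have hne : Nonempty V := by
      induction e using Sym2.inductionOn with
      | _ x y => exact ⟨x⟩
    exact Fintype.card_pos
  have hnR : (0 : ℝ) < n := by exact_mod_cast hn1
  set Bad : Finset V → Finset (Finset (Sym2 V)) :=
    fun S => E.powerset.filter (fun E' => (E' ∩ cutF G S).card ≤ f * S.card) with hBad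
  set BadAll := (II G).biUnion Bad ∪ {E} with hBadAll
  -- per-cut bound
  have hperS : ∀ S ∈ II G, ((Bad S).card : ℝ) ≤ 2 ^ m * ((1 : ℝ) / (8 * n)) ^ S.card := by
    intro S hS
    set N := (cutF G S).card with hN
    set t := f * S.card with ht
    have hCE : cutF G S ⊆ E := filter_subset _ _
    have hNm : N ≤ m := card_le_card hCE
    have htN : t ≤ N := by
      have h1 : t ≤ q * S.card := Nat.mul_le_mul_right _ hfq
      exact h1.trans (le_of_lt (hexp S hS))
    have hqN : q * S.card ≤ N := le_of_lt (hexp S hS)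
    have hb1 : ((Bad S).card : ℝ) ≤ (∑ i ∈ range (t + 1), (N.choose i : ℝ)) * 2 ^ (m - N) := by
      have := card_bad_le E (cutF G S) hCE t
      calc ((Bad S).card : ℝ)
          ≤ (((∑ i ∈ range (t + 1), N.choose i) * 2 ^ (m - N) : ℕ) : ℝ) := Nat.cast_le.mpr this
        _ = (∑ i ∈ range (t + 1), (N.choose i : ℝ)) * 2 ^ (m - N) := by push_cast; ring
    have hb2 : ((Bad S).card : ℝ) ≤ 3 ^ t * (4 / 3) ^ N * 2 ^ (m - N) := by
      refine hb1.trans ?_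
      apply mul_le_mul_of_nonneg_right (tail_le N t htN) (by positivity)
    have hb3 : (3 : ℝ) ^ t * (4 / 3) ^ N * 2 ^ (m - N) = 2 ^ m * (3 ^ t * (2 / 3) ^ N) := by
      have h4 : ((4 : ℝ) / 3) ^ N = 2 ^ N * (2 / 3) ^ N := by
        rw [← mul_pow]; norm_num
      rw [h4]
      have h5 : (2 : ℝ) ^ N * 2 ^ (m - N) = 2 ^ m := by
        rw [← pow_add]
        congr 1
        omega
      calc (3 : ℝ) ^ t * (2 ^ N * (2 / 3) ^ N) * 2 ^ (m - N)
          = (2 ^ N * 2 ^ (m - N)) * (3 ^ t * (2 / 3) ^ N) := by ring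
        _ = 2 ^ m * (3 ^ t * (2 / 3) ^ N) := by rw [h5]
    have hb4 : (3 : ℝ) ^ t * (2 / 3) ^ N ≤ ((1 : ℝ) / (8 * n)) ^ S.card := by
      calc (3 : ℝ) ^ t * (2 / 3) ^ N ≤ 3 ^ t * (2 / 3) ^ (q * S.card) := by
            apply mul_le_mul_of_nonneg_left _ (by positivity)
            apply pow_le_pow_of_le_one (by norm_num) (by norm_num) hqN
        _ = ((3 : ℝ) ^ f * (2 / 3) ^ q) ^ S.card := by
            rw [ht, mul_pow, ← pow_mul, ← pow_mul, mul_comm q S.card]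
        _ ≤ ((1 : ℝ) / (8 * n)) ^ S.card := by
            apply pow_le_pow_left₀ (by positivity) hρ
    calc ((Bad S).card : ℝ) ≤ 3 ^ t * (4 / 3) ^ N * 2 ^ (m - N) := hb2
      _ = 2 ^ m * (3 ^ t * (2 / 3) ^ N) := hb3
      _ ≤ 2 ^ m * ((1 : ℝ) / (8 * n)) ^ S.card := by
          apply mul_le_mul_of_nonneg_left hb4 (by positivity)
  -- total bound
  have hsumII : ∑ S ∈ II G, ((1 : ℝ) / (8 * n)) ^ S.card ≤ 1 / 2 := by
    refine le_trans ?_ (sum_powerset_nonempty_le (suppF G) n hn1 (card_le_univ _))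
    apply sum_le_sum_of_subset_of_nonneg
    · intro S hS
      rw [mem_II] at hS
      rw [mem_filter, mem_powerset]
      exact ⟨hS.1, hS.2.1⟩
    · intro S _ _
      positivity
  have hcard : BadAll.card < E.powerset.card := by
    have h2m : (E.powerset.card : ℝ) = 2 ^ m := by
      rw [card_powerset]; push_cast; ring
    have hba : (BadAll.card : ℝ) ≤ 2 ^ m * (1 / 2) + 1 := by
      have h1 : BadAll.card ≤ ((II G).biUnion Bad).card + 1 := by
        refine le_trans (card_union_le _ _) ?_
        simp
      have h2 : (((II G).biUnion Bad).card : ℝ) ≤ ∑ S ∈ II G, ((Bad S).card : ℝ) := by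
        calc (((II G).biUnion Bad).card : ℝ)
            ≤ ((∑ S ∈ II G, (Bad S).card : ℕ) : ℝ) := Nat.cast_le.mpr card_biUnion_le
          _ = ∑ S ∈ II G, ((Bad S).card : ℝ) := by push_cast; ring
      have h3 : ∑ S ∈ II G, ((Bad S).card : ℝ) ≤ 2 ^ m * (1 / 2) := by
        calc ∑ S ∈ II G, ((Bad S).card : ℝ)
            ≤ ∑ S ∈ II G, 2 ^ m * ((1 : ℝ) / (8 * n)) ^ S.card := sum_le_sum hperS
          _ = 2 ^ m * ∑ S ∈ II G, ((1 : ℝ) / (8 * n)) ^ S.card := by rw [mul_sum]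
          _ ≤ 2 ^ m * (1 / 2) := by
              apply mul_le_mul_of_nonneg_left hsumII (by positivity)
      calc (BadAll.card : ℝ) ≤ (((II G).biUnion Bad).card : ℝ) + 1 := by
            exact_mod_cast h1
        _ ≤ 2 ^ m * (1 / 2) + 1 := by linarith
    have hlt : (BadAll.card : ℝ) < (E.powerset.card : ℝ) := by
      rw [h2m]
      have h4 : (4 : ℝ) ≤ 2 ^ m := by
        calc (4 : ℝ) = 2 ^ 2 := by norm_num
          _ ≤ 2 ^ m := pow_le_pow_right₀ (by norm_num) hbig
      linarith
    exact_mod_cast hlt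
  have hnsub : ¬ E.powerset ⊆ BadAll := by
    intro hsub
    exact absurd (card_le_card hsub) (not_le.mpr hcard)
  obtain ⟨E', hE'p, hE'bad⟩ := not_subset.mp hnsub
  refine ⟨E', mem_powerset.mp hE'p, ?_, ?_⟩
  · intro h
    exact hE'bad (mem_union_right _ (mem_singleton.mpr h))
  · intro S hS
    by_contra hle
    exact hE'bad (mem_union_left _ (mem_biUnion.mpr
      ⟨S, hS, mem_filter.mpr ⟨hE'p, not_lt.mp hle⟩⟩))

/-! ### arithmetic for the recursion -/

lemma wlog_mono (R : ℕ) {x y : ℕ} (h : x ≤ y) :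
    R * x * (1 + Nat.log 2 x) ≤ R * y * (1 + Nat.log 2 y) := by
  have h2 : Nat.log 2 x ≤ Nat.log 2 y := Nat.log_mono_right h
  apply Nat.mul_le_mul
  · exact Nat.mul_le_mul_left R h
  · omega

lemma split_arith (qv s w : ℕ) (hs : 1 ≤ s) (h2 : 2 * s ≤ w) :
    qv * s + ((10 * qv) * s * (1 + Nat.log 2 s)
      + (10 * qv) * (w - s) * (1 + Nat.log 2 (w - s)))
      ≤ (10 * qv) * w * (1 + Nat.log 2 w) := by
  obtain ⟨d, rfl⟩ : ∃ d, w = s + d := ⟨w - s, by omega⟩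
  have hsd : s + d - s = d := by omega
  rw [hsd]
  have ha : Nat.log 2 s + 1 ≤ Nat.log 2 (s + d) := by
    calc Nat.log 2 s + 1 = Nat.log 2 (s * 2) := (Nat.log_mul_base one_lt_two (by omega)).symm
      _ ≤ Nat.log 2 (s + d) := Nat.log_mono_right (by omega)
  have hb : Nat.log 2 d ≤ Nat.log 2 (s + d) := Nat.log_mono_right (by omega)
  set a := Nat.log 2 s
  set b := Nat.log 2 d
  set c := Nat.log 2 (s + d)
  calc qv * s + ((10 * qv) * s * (1 + a) + (10 * qv) * d * (1 + b))
      ≤ qv * s + ((10 * qv) * s * (1 + a) + (10 * qv) * d * (1 + c)) := by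
        have : (10 * qv) * d * (1 + b) ≤ (10 * qv) * d * (1 + c) := Nat.mul_le_mul_left _ (by omega)
        omega
    _ ≤ (10 * qv) * s * (1 + c) + (10 * qv) * d * (1 + c) := by
        have h1 : (10 * qv) * s * (1 + a) + (10 * qv) * s ≤ (10 * qv) * s * (1 + c) := by
          have : (10 * qv) * s * ((1 + a) + 1) ≤ (10 * qv) * s * (1 + c) :=
            Nat.mul_le_mul_left _ (by omega)
          calc (10 * qv) * s * (1 + a) + (10 * qv) * s
              = (10 * qv) * s * ((1 + a) + 1) := by ring
            _ ≤ (10 * qv) * s * (1 + c) := this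
        have h2 : qv * s ≤ (10 * qv) * s := Nat.mul_le_mul_right s (by omega)
        omega
    _ = (10 * qv) * (s + d) * (1 + c) := by ring

/-! ### main recursion -/

lemma inS_le (G : SimpleGraph V) (S : Finset V) : inS G S ≤ G := fun _ _ h => h.1
lemma outS_le (G : SimpleGraph V) (S : Finset V) : outS G S ≤ G := fun _ _ h => h.1

def qq (V : Type) [Fintype V] (f : ℕ) : ℕ := 10 * (f + Nat.log 2 (Fintype.card V) + 1)

lemma key (f : ℕ) (hf : 0 < f) :
    ∀ m : ℕ, ∀ G : SimpleGraph V, (EF G).card ≤ m →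
      ∃ H : SimpleGraph V, IsFDCertificate G H f ∧
        (EF H).card ≤ (10 * qq V f) * (suppF G).card * (1 + Nat.log 2 (suppF G).card) := by
  intro m
  induction m with
  | zero =>
    intro G hm
    refine ⟨G, cert_refl G f, ?_⟩
    have h0 : (EF G).card = 0 := Nat.le_zero.mp hm
    rw [h0]
    exact Nat.zero_le _
  | succ m ih =>
    intro G hm
    by_cases h0 : (EF G).card ≤ m
    · exact ih G h0
    set q := qq V f with hq
    have hqval : q = 10 * (f + Nat.log 2 (Fintype.card V) + 1) := by rw [hq]; rfl
    set R := 10 * q with hR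
    set W := suppF G with hW
    set w := W.card with hw
    by_cases hstop : (EF G).card ≤ R * w
    · refine ⟨G, cert_refl G f, ?_⟩
      calc (EF G).card ≤ R * w := hstop
        _ ≤ R * w * (1 + Nat.log 2 w) := Nat.le_mul_of_pos_right _ (by omega)
    have hm1 : 1 ≤ (EF G).card := by omega
    have hfq : f ≤ q := by omega
    by_cases hsplit : ∃ S ∈ II G, (cutF G S).card ≤ q * S.card
    · -- SPLIT case
      obtain ⟨S, hSII, hcut⟩ := hsplit
      rw [mem_II, ← hW] at hSII
      obtain ⟨hSW, hSne, hScard⟩ := hSII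
      have hWSne : (W \ S).Nonempty := by
        rw [← card_pos, card_sdiff_of_subset hSW]
        have := card_pos.mpr hSne
        omega
      have hAcard : (EF (inS G S)).card ≤ m := by
        have hlt : (EF (inS G S)).card < (EF G).card := by
          apply card_lt_card
          rw [Finset.ssubset_iff_of_subset (EF_mono (inS_le G S))]
          obtain ⟨v, hv⟩ := hWSne
          rw [mem_sdiff] at hv
          obtain ⟨u, hadj⟩ := mem_suppF.mp (hW ▸ hv.1)
          refine ⟨s(v, u), mem_EF.mpr ((SimpleGraph.mem_edgeSet _).mpr hadj), ?_⟩
          intro hmem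
          exact hv.2 ((SimpleGraph.mem_edgeSet _).mp (mem_EF.mp hmem)).2.1
        omega
      have hBcard : (EF (outS G S)).card ≤ m := by
        have hlt : (EF (outS G S)).card < (EF G).card := by
          apply card_lt_card
          rw [Finset.ssubset_iff_of_subset (EF_mono (outS_le G S))]
          obtain ⟨v, hv⟩ := hSne
          obtain ⟨u, hadj⟩ := mem_suppF.mp (hW ▸ hSW hv)
          refine ⟨s(v, u), mem_EF.mpr ((SimpleGraph.mem_edgeSet _).mpr hadj), ?_⟩
          intro hmem
          exact ((SimpleGraph.mem_edgeSet _).mp (mem_EF.mp hmem)).2.1 hv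
        omega
      obtain ⟨HA, certA, bndA⟩ := ih (inS G S) hAcard
      obtain ⟨HB, certB, bndB⟩ := ih (outS G S) hBcard
      refine ⟨crossS G S ⊔ (HA ⊔ HB), ?_, ?_⟩
      · have h1 := cert_sup (cert_refl (crossS G S) f) (cert_sup certA certB)
        rwa [split_eq] at h1
      · have hbA : (EF HA).card ≤ R * S.card * (1 + Nat.log 2 S.card) := by
          refine bndA.trans ?_
          exact wlog_mono R (card_le_card (suppF_inS G S))
        have hbB : (EF HB).card ≤ R * (w - S.card) * (1 + Nat.log 2 (w - S.card)) := by
          refine bndB.trans ?_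
          have hsub : suppF (outS G S) ⊆ W \ S := hW ▸ suppF_outS G S
          have := card_le_card hsub
          rw [card_sdiff_of_subset hSW] at this
          exact wlog_mono R this
        have hX : (EF (crossS G S)).card ≤ q * S.card := by
          rw [EF_crossS]
          exact hcut
        calc (EF (crossS G S ⊔ (HA ⊔ HB))).card
            ≤ (EF (crossS G S)).card + (EF (HA ⊔ HB)).card := EF_sup_card _ _
          _ ≤ (EF (crossS G S)).card + ((EF HA).card + (EF HB).card) := by
              have := EF_sup_card HA HB
              omega
          _ ≤ q * S.card + (R * S.card * (1 + Nat.log 2 S.card)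
                + R * (w - S.card) * (1 + Nat.log 2 (w - S.card))) := by
              omega
          _ = q * S.card + ((10 * q) * S.card * (1 + Nat.log 2 S.card)
                + (10 * q) * (w - S.card) * (1 + Nat.log 2 (w - S.card))) := by rw [hR]
          _ ≤ (10 * q) * w * (1 + Nat.log 2 w) :=
              split_arith q S.card w (card_pos.mpr hSne) hScard
          _ = R * w * (1 + Nat.log 2 w) := by rw [hR]
    · -- EXPANDER case
      have hexp : ∀ S ∈ II G, q * S.card < (cutF G S).card := by
        push_neg at hsplit
        exact hsplit
      -- a vertex in the support
      have hvW : ∃ v, v ∈ W := by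
        obtain ⟨e, he⟩ := card_pos.mp hm1
        induction e using Sym2.inductionOn with
        | _ x y =>
          exact ⟨x, hW ▸ edge_vert_supp (mem_EF.mp he) (Sym2.mem_mk_left x y)⟩
      obtain ⟨v0, hv0⟩ := hvW
      have hW1 : 1 ≤ w := card_pos.mpr ⟨v0, hv0⟩
      have hn1 : 1 ≤ Fintype.card V := by
        haveI : Nonempty V := ⟨v0⟩
        exact Fintype.card_pos
      have hq10 : 10 ≤ q := by omega
      have hbig : 2 ≤ (EF G).card := by
        have h2Rw : 2 ≤ R * w := by
          calc 2 ≤ 10 * 10 * 1 := by norm_num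
            _ ≤ 10 * q * w := Nat.mul_le_mul (Nat.mul_le_mul (le_refl 10) hq10) hW1
            _ = R * w := by rw [hR]
        exact le_trans h2Rw (le_of_lt (not_le.mp hstop))
      have hρ : (3 : ℝ) ^ f * (2 / 3) ^ q ≤ 1 / (8 * Fintype.card V) := by
        have := rho_bound f (Fintype.card V) hn1
        rw [hqval]
        exact this
      obtain ⟨E', hsub, hne, hcuts⟩ := sample_exists G f q hfq hbig hρ hexp
      set G'' := SimpleGraph.fromEdgeSet (↑E' : Set (Sym2 V)) with hG''
      have hG''le : G'' ≤ G := by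
        calc G'' ≤ SimpleGraph.fromEdgeSet G.edgeSet :=
              SimpleGraph.fromEdgeSet_mono (fun e he => mem_EF.mp (hsub he))
          _ = G := SimpleGraph.fromEdgeSet_edgeSet G
      have hEF'' : EF G'' = E' := by
        ext e
        rw [mem_EF, hG'', SimpleGraph.edgeSet_fromEdgeSet, Set.mem_diff]
        constructor
        · rintro ⟨h1, _⟩
          exact h1
        · intro h
          exact ⟨h, fun hd =>
            SimpleGraph.not_isDiag_of_mem_edgeSet G (mem_EF.mp (hsub h)) hd⟩
      have hcut'' : ∀ S : Finset V, cutF G'' S = E' ∩ cutF G S := by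
        intro S
        ext e
        rw [cutF, cutF, mem_inter, mem_filter, mem_filter, hEF'']
        constructor
        · rintro ⟨h1, h2⟩
          exact ⟨h1, hsub h1, h2⟩
        · rintro ⟨h1, _, h2⟩
          exact ⟨h1, h2⟩
      have hcert'' : IsFDCertificate G G'' f := by
        refine ⟨hG''le, ?_⟩
        intro F hFsub hdeg u v
        have hsurv : ∀ T : Finset V, T ⊆ W → T.Nonempty → T ≠ W →
            ∃ x y, (G''.deleteEdges F).Adj x y ∧ x ∈ T ∧ y ∈ W ∧ y ∉ T := by
          intro T hTW hTne hTneW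
          have hrep : ∃ rep, rep ∈ II G ∧ cutF G'' rep = cutF G'' T := by
            by_cases h2T : 2 * T.card ≤ w
            · exact ⟨T, mem_II.mpr ⟨hW ▸ hTW, hTne, by rw [← hW]; exact h2T⟩, rfl⟩
            · refine ⟨W \ T, mem_II.mpr ⟨hW ▸ sdiff_subset, ?_, ?_⟩, ?_⟩
              · rw [sdiff_nonempty]
                intro hWT
                exact hTneW (subset_antisymm hTW hWT)
              · have hTw : T.card ≤ w := card_le_card hTW
                rw [← hW, card_sdiff_of_subset hTW]
                omega
              · ext e
                rw [cutF, cutF, mem_filter, mem_filter]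
                constructor
                · rintro ⟨h1, h2⟩
                  refine ⟨h1, ?_⟩
                  have heW : ∀ x ∈ e, x ∈ W := by
                    intro x hx
                    exact hW ▸ edge_vert_supp    
                      (SimpleGraph.edgeSet_mono hG''le (mem_EF.mp h1)) hx
                  exact (cross_compl heW).mpr h2
                · rintro ⟨h1, h2⟩
                  refine ⟨h1, ?_⟩
                  have heW : ∀ x ∈ e, x ∈ W := by
                    intro x hx
                    exact hW ▸ edge_vert_supp
                      (SimpleGraph.edgeSet_mono hG''le (mem_EF.mp h1)) hx
                  exact (cross_compl heW).mp h2
          obtain ⟨rep, hrepII, hrepcut⟩ := hrep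
          have hFcount : ((cutF G'' rep).filter (fun e => e ∈ F)).card ≤ f * rep.card := by
            apply card_incident_le hdeg _ ?_ rep ?_
            · intro e he
              exact (mem_filter.mp he).2
            · intro e he
              have hcr : cross rep e := (mem_filter.mp (mem_filter.mp he).1).2
              obtain ⟨x, hx1, hx2⟩ := hcr.1
              exact ⟨x, hx2, hx1⟩
          have hltc : ((cutF G'' rep).filter (fun e => e ∈ F)).card < (cutF G'' rep).card := by
            refine lt_of_le_of_lt hFcount ?_
            rw [hcut'']
            exact hcuts rep hrepII
          have hnsub2 : ¬ (cutF G'' rep ⊆ (cutF G'' rep).filter (fun e => e ∈ F)) :=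
            fun hsub' => absurd (card_le_card hsub') (not_le.mpr hltc)
          obtain ⟨e, he, heF⟩ := not_subset.mp hnsub2
          have heNF : e ∉ F := fun h => heF (mem_filter.mpr ⟨he, h⟩)
          rw [hrepcut] at he
          have heEF : e ∈ EF G'' := (mem_filter.mp he).1
          obtain ⟨a, b, rfl, hadj, haT, hbT⟩ := cross_elim heEF (mem_filter.mp he).2
          refine ⟨a, b, ?_, haT, ?_, hbT⟩
          · rw [SimpleGraph.deleteEdges_adj]
            exact ⟨hadj, heNF⟩
          · exact hW ▸ edge_vert_supp
              (SimpleGraph.edgeSet_mono hG''le (mem_EF.mp heEF)) (Sym2.mem_mk_right a b)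
        constructor
        · intro h
          exact h.mono (deleteEdges_mono_left hG''le F)
        · intro h
          rcases eq_or_ne u v with rfl | hne
          · exact SimpleGraph.Reachable.refl u
          · have hu : u ∈ W := by
              obtain ⟨x, hx⟩ := reach_adj_exists h hne
              rw [SimpleGraph.deleteEdges_adj] at hx
              exact hW ▸ mem_suppF.mpr ⟨x, hx.1⟩
            have hv : v ∈ W := by
              obtain ⟨x, hx⟩ := reach_adj_exists h.symm hne.symm
              rw [SimpleGraph.deleteEdges_adj] at hx
              exact hW ▸ mem_suppF.mpr ⟨x, hx.1⟩
            exact reach_of_cuts (G''.deleteEdges F) W hsurv hu hv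
      have hcard'' : (EF G'').card ≤ m := by
        have hlt : (EF G'').card < (EF G).card := by
          rw [hEF'']
          exact card_lt_card (HasSubset.Subset.ssubset_of_ne hsub hne)
        omega
      obtain ⟨H, certH, bndH⟩ := ih G'' hcard''
      refine ⟨H, cert_trans hcert'' certH, ?_⟩
      refine bndH.trans ?_
      have hsupp'' : (suppF G'').card ≤ w := by
        rw [hw, hW]
        exact card_le_card (suppF_mono hG''le)
      exact wlog_mono R hsupp''

end

end FDCert

/-- There are absolute constants `C, c > 0` such that every `n`-vertex graph
has an `f`-FD connectivity certificate with at most `C·f·n·(log n)^c` edges. -/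
theorem fd_certificate_exists :
    ∃ C c : ℝ, 0 < C ∧ 0 < c ∧
      ∀ (n f : ℕ), 0 < n → 0 < f →
        ∀ (V : Type) [Fintype V], Fintype.card V = n →
          ∀ G : SimpleGraph V,
            ∃ H : SimpleGraph V,
              IsFDCertificate G H f ∧
              (H.edgeSet.ncard : ℝ) ≤ C * f * n * Real.log n ^ c := by
  classical
  refine ⟨10000, 2, by norm_num, by norm_num, ?_⟩
  intro n f hn hf V _ hcard G
  obtain ⟨H, hcert, hbnd⟩ := FDCert.key f hf (FDCert.EF G).card G (le_refl _)
  refine ⟨H, hcert, ?_⟩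
  have hncard : H.edgeSet.ncard = (FDCert.EF H).card :=
    Set.ncard_eq_toFinset_card _ (Set.toFinite _)
  set L := Nat.log 2 n with hLdef
  rcases Nat.lt_or_ge n 2 with hsmall | h2
  · -- n = 1
    have hn1 : n = 1 := by omega
    have hsing : Subsingleton V := by
      apply Fintype.card_le_one_iff_subsingleton.mp
      omega
    have hsupp : FDCert.suppF G = ∅ := by
      rw [Finset.eq_empty_iff_forall_notMem]
      intro v hv
      obtain ⟨u, hadj⟩ := FDCert.mem_suppF.mp hv
      have huv : u = v := Subsingleton.elim u v
      exact G.irrefl (huv ▸ hadj)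
    have hzero : (FDCert.EF H).card = 0 := by
      rw [hsupp] at hbnd
      simpa using hbnd
    rw [hncard, hzero, hn1]
    push_cast
    rw [Real.log_one, Real.zero_rpow (by norm_num : (2 : ℝ) ≠ 0)]
    norm_num
  · -- n ≥ 2
    have hwn : (FDCert.suppF G).card ≤ n := by
      rw [← hcard]
      exact Finset.card_le_univ _
    have natbound := le_trans hbnd (FDCert.wlog_mono _ hwn)
    have hqqv : FDCert.qq V f = 10 * (f + L + 1) := by rw [FDCert.qq, hcard]
    rw [hqqv] at natbound
    -- real estimates
    set x := Real.log n with hx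
    have hlog2 : (0.6931471803 : ℝ) < Real.log 2 := Real.log_two_gt_d9
    have hx069 : (0.6931471803 : ℝ) ≤ x := by
      refine le_trans (le_of_lt hlog2) ?_
      apply Real.log_le_log (by norm_num)
      exact_mod_cast h2
    have hL : (L : ℝ) * Real.log 2 ≤ x := by
      have hpow : (2 : ℕ) ^ L ≤ n := Nat.pow_log_le_self 2 (by omega)
      have hpowR : ((2 : ℝ)) ^ L ≤ (n : ℝ) := by exact_mod_cast hpow
      calc (L : ℝ) * Real.log 2 = Real.log ((2 : ℝ) ^ L) := by rw [Real.log_pow]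
        _ ≤ x := Real.log_le_log (by positivity) hpowR
    have hL15 : (L : ℝ) ≤ 1.5 * x := by
      nlinarith [Nat.cast_nonneg (α := ℝ) L]
    have hf1 : (1 : ℝ) ≤ (f : ℝ) := by exact_mod_cast hf
    have hLpos : (0 : ℝ) ≤ (L : ℝ) := Nat.cast_nonneg L
    have hxpos : (0 : ℝ) < x := by linarith
    -- main product bound
    have hmain : ((f : ℝ) + L + 1) * (1 + L) ≤ 100 * f * x ^ 2 := by
      have h1 : (f : ℝ) + L + 1 ≤ (f : ℝ) * ((L : ℝ) + 2) := by nlinarith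
      have h2' : (L : ℝ) + 2 ≤ 4.5 * x := by nlinarith
      have h3 : 1 + (L : ℝ) ≤ 3 * x := by nlinarith
      calc ((f : ℝ) + L + 1) * (1 + L) ≤ ((f : ℝ) * ((L : ℝ) + 2)) * (1 + L) := by
            apply mul_le_mul_of_nonneg_right h1 (by linarith)
        _ ≤ ((f : ℝ) * (4.5 * x)) * (3 * x) := by
            apply mul_le_mul _ h3 (by linarith) (by positivity)
            apply mul_le_mul_of_nonneg_left h2' (by linarith)
        _ = 13.5 * f * x ^ 2 := by ring
        _ ≤ 100 * f * x ^ 2 := by nlinarith [sq_nonneg x]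
    have hnR : (0 : ℝ) ≤ (n : ℝ) := Nat.cast_nonneg n
    have hrpow : x ^ (2 : ℝ) = x ^ (2 : ℕ) := by
      rw [show ((2 : ℝ)) = ((2 : ℕ) : ℝ) by norm_num, Real.rpow_natCast]
    calc (H.edgeSet.ncard : ℝ)
        = ((FDCert.EF H).card : ℝ) := by rw [hncard]
      _ ≤ ((10 * (10 * (f + L + 1)) * n * (1 + L) : ℕ) : ℝ) := Nat.cast_le.mpr natbound
      _ = 100 * (((f : ℝ) + L + 1) * (1 + L)) * n := by push_cast; ring
      _ ≤ 100 * (100 * f * x ^ 2) * n := by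
          apply mul_le_mul_of_nonneg_right _ hnR
          apply mul_le_mul_of_nonneg_left hmain (by norm_num)
      _ = 10000 * f * n * x ^ (2 : ℕ) := by ring
      _ = 10000 * f * n * Real.log n ^ (2 : ℝ) := by rw [hrpow, hx]
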